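/- Let G be a finite simple graph, d ≥ 1 an integer, and X a set of at least 2d+1 pairwise nonadjacent vertices of G all having the same neighborhood T, where |T| ≥ d+1. Then X ∪ T is monochromatic. -/
import Mathlib


variable {V : Type*}

/-- A `d`-cut of a simple graph `G`: a partition `(A, B)` of the vertex set into two
nonempty parts such that every vertex of `A` has at most `d` neighbors in `B` and
every vertex of `B` has at most `d` neighbors in `A`. -/
def IsDCut (G : SimpleGraph V) (d : ℕ) (A B : Set V) : Prop :=
  A.Nonempty ∧ B.Nonempty ∧ Disjoint A B ∧ A ∪ B = Set.univ ∧
    (∀ v ∈ A, (G.neighborSet v ∩ B).ncard ≤ d) ∧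
    (∀ v ∈ B, (G.neighborSet v ∩ A).ncard ≤ d)

/-- A vertex set `T` is monochromatic if every `d`-cut of `G` has `T` entirely on one side. -/
def Monochromatic (G : SimpleGraph V) (d : ℕ) (T : Set V) : Prop :=
  ∀ A B : Set V, IsDCut G d A B → T ⊆ A ∨ T ⊆ B

/-- The edge cut of a cut `(A, B)`: the set of edges of `G` with one endpoint in `A`
and the other endpoint in `B`. -/
def edgeCut (G : SimpleGraph V) (A B : Set V) : Set (Sym2 V) :=
  {e | e ∈ G.edgeSet ∧ ∃ u v, e = s(u, v) ∧ u ∈ A ∧ v ∈ B}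

/-- A minimal `d`-cut: no `d`-cut has an edge cut that is a proper subset of its edge cut. -/
def IsMinimalDCut (G : SimpleGraph V) (d : ℕ) (A B : Set V) : Prop :=
  IsDCut G d A B ∧ ∀ A' B' : Set V, IsDCut G d A' B' → ¬ edgeCut G A' B' ⊂ edgeCut G A B

/-- A maximal `d`-cut: no `d`-cut has an edge cut that properly contains its edge cut. -/
def IsMaximalDCut (G : SimpleGraph V) (d : ℕ) (A B : Set V) : Prop :=
  IsDCut G d A B ∧ ∀ A' B' : Set V, IsDCut G d A' B' → ¬ edgeCut G A B ⊂ edgeCut G A' B'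

/-- If `X` is a set of at least `2d+1` pairwise nonadjacent vertices all having the same
neighborhood `T` with `|T| ≥ d+1`, then `X ∪ T` is monochromatic. -/
theorem independent_twins_monochromatic [Fintype V] (G : SimpleGraph V) (d : ℕ)
    (hd : 1 ≤ d) (X T : Set V)
    (hindep : X.Pairwise fun x y => ¬ G.Adj x y)
    (hnbhd : ∀ x ∈ X, G.neighborSet x = T)
    (hXsize : 2 * d + 1 ≤ X.ncard) (hTsize : d + 1 ≤ T.ncard) :
    Monochromatic G d (X ∪ T) := by
  intro A B hcut
  obtain ⟨hA, hB, hdisj, hunion, hAB, hBA⟩ := hcut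
  have hmem : ∀ v : V, v ∈ A ∨ v ∈ B := by
    intro v
    have : v ∈ A ∪ B := by rw [hunion]; exact Set.mem_univ v
    exact this
  have hXadj : ∀ t ∈ T, ∀ x ∈ X, x ∈ G.neighborSet t := by
    intro t ht x hx
    have h1 : t ∈ G.neighborSet x := by rw [hnbhd x hx]; exact ht
    exact h1.symm
  -- T ⊆ A ∨ T ⊆ B
  have hT : T ⊆ A ∨ T ⊆ B := by
    by_contra h
    push_neg at h
    obtain ⟨h1', h2'⟩ := h
    obtain ⟨t, ht, htA⟩ := Set.not_subset.mp h1'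
    obtain ⟨t', ht', ht'B⟩ := Set.not_subset.mp h2'
    have htB : t ∈ B := (hmem t).resolve_left htA
    have ht'A : t' ∈ A := (hmem t').resolve_right ht'B
    have h1 : (X ∩ A).ncard ≤ d := by
      refine le_trans (Set.ncard_le_ncard ?_ (G.neighborSet t ∩ A).toFinite) (hBA t htB)
      exact fun x ⟨hx, hxA⟩ => ⟨hXadj t ht x hx, hxA⟩
    have h2 : (X ∩ B).ncard ≤ d := by
      refine le_trans (Set.ncard_le_ncard ?_ (G.neighborSet t' ∩ B).toFinite) (hAB t' ht'A)
      exact fun x ⟨hx, hxB⟩ => ⟨hXadj t' ht' x hx, hxB⟩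
    have hXeq : X = (X ∩ A) ∪ (X ∩ B) := by
      rw [← Set.inter_union_distrib_left, hunion, Set.inter_univ]
    have h3 : X.ncard ≤ (X ∩ A).ncard + (X ∩ B).ncard := by
      nth_rewrite 1 [hXeq]; exact Set.ncard_union_le _ _
    omega
  rcases hT with hTA | hTB
  · left
    refine Set.union_subset ?_ hTA
    intro x hx
    by_contra hxA
    have hxB : x ∈ B := (hmem x).resolve_left hxA
    have h1 : (G.neighborSet x ∩ A).ncard ≤ d := hBA x hxB
    have h2 : G.neighborSet x ∩ A = T := by
      rw [hnbhd x hx, Set.inter_eq_left.mpr hTA]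
    rw [h2] at h1
    omega
  · right
    refine Set.union_subset ?_ hTB
    intro x hx
    by_contra hxB
    have hxA : x ∈ A := (hmem x).resolve_right hxB
    have h1 : (G.neighborSet x ∩ B).ncard ≤ d := hAB x hxA
    have h2 : G.neighborSet x ∩ B = T := by
      rw [hnbhd x hx, Set.inter_eq_left.mpr hTB]
    rw [h2] at h1
    omega
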